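/- Let H be a real inner product space, a : H × H → ℝ a symmetric positive semidefinite bilinear form with a(v,v) ≥ λ₁·‖v‖² for all v ∈ H for some λ₁ > 0, and b : H × H × H → ℝ a trilinear map with b(u,v,v) = 0 for all u, v ∈ H. Let μ, γ, δ, k > 0, set t_i = i·k, let f^1, …, f^N ∈ H with ‖f^n‖ ≤ F for all n, and let U^0, …, U^N ∈ H satisfy, for every 1 ≤ n ≤ N and every φ ∈ H, ⟨(U^n − U^{n−1})/k, φ⟩ + μ·a(U^n, φ) + a( k·∑_{j=1}^{n} γ·e^{−δ(t_n−t_j)}·U^j, φ ) + b(U^n, U^n, φ) = ⟨f^n, φ⟩. Define U^n_β = k·∑_{j=1}^{n} γ·e^{−δ(t_n−t_j)}·U^j with U^0_β = 0. Then for every α with 0 < α ≤ δ and e^{αk} ≤ 1 + (μλ₁/2)·k, and every 1 ≤ n ≤ N: ‖U^n‖² + (e^{−δk}/γ)·a(U^n_β, U^n_β) ≤ e^{−α t_n}·‖U^0‖² + ((1 − e^{−α t_n})/(α·μ·λ₁))·F². -/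

import Mathlib

open scoped RealInnerProductSpace

private lemma step_arith (μ γ lam₁ k F c e x y A B C p q aU W : ℝ)
    (hμ : 0 < μ) (hγ : 0 < γ) (hk : 0 < k) (hlam₁ : 0 < lam₁)
    (hc0 : 0 < c) (hc1 : c ≤ 1)
    (hec : e * c ≤ 1) (hek : e ≤ 1 + (μ * lam₁ / 2) * k)
    (hs : (1/k) * (x^2 - p) + μ * aU + W = q)
    (hW : k * γ * W = A - c * C)
    (hCS : 2 * (c * C) ≤ A + c^2 * B)
    (hpb : 2 * p ≤ x^2 + y^2)
    (hqb : q ≤ F * x)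
    (haUb : lam₁ * x^2 ≤ aU)
    (hA0 : 0 ≤ A) (hB0 : 0 ≤ B) :
    μ * lam₁ * (e * (γ * x^2 + c * A)) ≤ μ * lam₁ * (γ * y^2 + c * B) + k * γ * F^2 := by
  have hk' : (k:ℝ) ≠ 0 := ne_of_gt hk
  have hs2 : γ * (x^2 - p) + k * γ * μ * aU + (A - c * C) = k * γ * q := by
    rw [← hW]
    linear_combination (k * γ) * hs - (γ * (x^2 - p)) * (div_self hk')
  have h3 : A + 2*γ*x^2 + 2*k*γ*μ*aU ≤ 2*k*γ*q + 2*γ*p + c^2*B := by linarith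
  have h4 : A + γ*x^2 + 2*k*γ*(μ*lam₁)*x^2 ≤ 2*k*γ*(F*x) + γ*y^2 + c^2*B := by
    have e1 := mul_le_mul_of_nonneg_left hpb hγ.le
    have e2 := mul_le_mul_of_nonneg_left hqb (by positivity : (0:ℝ) ≤ 2*k*γ)
    have e3 := mul_le_mul_of_nonneg_left haUb (by positivity : (0:ℝ) ≤ 2*k*γ*μ)
    linarith [e1, e2, e3]
  set M := μ * lam₁ with hM
  have hM0 : 0 < M := by positivity
  have h5 : M*A + M*γ*x^2 + k*γ*M^2*x^2 ≤ k*γ*F^2 + M*γ*y^2 + M*(c^2*B) := by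
    have e1 := mul_le_mul_of_nonneg_left h4 hM0.le
    have e2 : 0 ≤ k*γ*(F - M*x)^2 := by positivity
    nlinarith [e1, e2]
  have h6 : M*(e*(c*A)) ≤ M*A := by
    have e1 := mul_le_mul_of_nonneg_right hec (mul_nonneg hM0.le hA0)
    linarith [e1]
  have h7 : M*(e*(γ*x^2)) ≤ M*γ*x^2 + k*γ*M^2*x^2 := by
    have e1 := mul_le_mul_of_nonneg_right hek (by positivity : (0:ℝ) ≤ M*γ*x^2)
    have e2 : (0:ℝ) ≤ k*γ*M^2*x^2 := by positivity
    linarith [e1, e2]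
  have h8 : M*(c^2*B) ≤ M*(c*B) := by
    have e1 : (0:ℝ) ≤ (M*(1-c))*(c*B) :=
      mul_nonneg (mul_nonneg hM0.le (by linarith)) (mul_nonneg hc0.le hB0)
    linarith [e1]
  linarith [h5, h6, h7, h8]

private lemma mul_div_arith (α μ lam₁ γ c A X : ℝ) (hγ : γ ≠ 0) :
    α * (μ * lam₁) * γ * (X + c / γ * A)
      = α * (μ * lam₁ * (γ * X + c * A)) := by
  field_simp

private lemma mul_div_arith2 (α μ lam₁ γ e u0 F : ℝ)
    (hα : α ≠ 0) (hμ : μ ≠ 0) (hl : lam₁ ≠ 0) :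
    α * (μ * lam₁) * γ * (e * u0 + (1 - e) / (α * μ * lam₁) * F ^ 2)
      = α * (μ * lam₁) * γ * (e * u0) + γ * (1 - e) * F ^ 2 := by
  field_simp

private lemma ind_arith (α M γ k F e eA eB u0 E E' : ℝ)
    (hα : 0 < α) (hM : 0 < M) (hγ : 0 < γ)
    (heA : 0 < eA) (hee : eA * e = 1) (h1k : α * k + 1 ≤ e)
    (hstep : M * (e * E') ≤ M * E + k * γ * F^2)
    (hIH : α * (M * E) ≤ α * M * γ * (eB * u0) + γ * (1 - eB) * F^2) :
    α * (M * E') ≤ α * M * γ * ((eA * eB) * u0) + γ * (1 - eA * eB) * F^2 := by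
  have e0 : α * eA * (M * (e * E')) = α * (M * E') := by
    linear_combination (α * M * E') * hee
  have e1 := mul_le_mul_of_nonneg_left hstep (by positivity : (0:ℝ) ≤ α * eA)
  have e2 := mul_le_mul_of_nonneg_left hIH heA.le
  have e3 : eA * (α * k + 1) ≤ 1 := by
    have := mul_le_mul_of_nonneg_left h1k heA.le
    linarith [this]
  have e4 : (0:ℝ) ≤ γ * F^2 := by positivity
  have e5 := mul_le_mul_of_nonneg_left e3 e4
  nlinarith [e0, e1, e2, e5]

theorem backward_euler_uniform_estimate
    {H : Type*} [NormedAddCommGroup H] [InnerProductSpace ℝ H]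
    (a : H →ₗ[ℝ] H →ₗ[ℝ] ℝ) (lam₁ : ℝ) (hlam₁ : 0 < lam₁)
    (hsymm : ∀ u v : H, a u v = a v u)
    (hcoer : ∀ v : H, lam₁ * ‖v‖ ^ 2 ≤ a v v)
    (b : H →ₗ[ℝ] H →ₗ[ℝ] H →ₗ[ℝ] ℝ)
    (hb : ∀ u v : H, b u v v = 0)
    (μ γ δ k F : ℝ) (hμ : 0 < μ) (hγ : 0 < γ) (hδ : 0 < δ) (hk : 0 < k)
    (N : ℕ) (f : ℕ → H) (hf : ∀ n : ℕ, 1 ≤ n → n ≤ N → ‖f n‖ ≤ F)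
    (U : ℕ → H)
    (scheme : ∀ n : ℕ, 1 ≤ n → n ≤ N → ∀ φ : H,
      ⟪(1 / k) • (U n - U (n - 1)), φ⟫ + μ * a (U n) φ +
        a (k • ∑ j ∈ Finset.Icc 1 n,
            (γ * Real.exp (-δ * ((n : ℝ) * k - (j : ℝ) * k))) • U j) φ +
        b (U n) (U n) φ = ⟪f n, φ⟫)
    (Uβ : ℕ → H)
    (hUβ : ∀ n : ℕ, Uβ n = k • ∑ j ∈ Finset.Icc 1 n,
        (γ * Real.exp (-δ * ((n : ℝ) * k - (j : ℝ) * k))) • U j) :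
    ∀ α : ℝ, 0 < α → α ≤ δ →
      Real.exp (α * k) ≤ 1 + (μ * lam₁ / 2) * k →
      ∀ n : ℕ, 1 ≤ n → n ≤ N →
        ‖U n‖ ^ 2 + (Real.exp (-δ * k) / γ) * a (Uβ n) (Uβ n) ≤
          Real.exp (-α * ((n : ℝ) * k)) * ‖U 0‖ ^ 2 +
            ((1 - Real.exp (-α * ((n : ℝ) * k))) / (α * μ * lam₁)) * F ^ 2 := by
  intro α hα hαδ hαk n hn1 hnN
  have hc0 : (0:ℝ) < Real.exp (-δ * k) := Real.exp_pos _
  have hc1 : Real.exp (-δ * k) ≤ 1 := Real.exp_le_one_iff.mpr (by nlinarith)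
  have hpsd : ∀ v : H, 0 ≤ a v v := fun v => le_trans (by positivity) (hcoer v)
  have cs : ∀ x y : H, 2 * a x y ≤ a x x + a y y := by
    intro x y
    have h0 : 0 ≤ a (x - y) (x - y) := hpsd _
    have hxy : a (x - y) (x - y) = a x x - a y x - (a x y - a y y) := by
      simp [map_sub, LinearMap.sub_apply]
    rw [hsymm y x] at hxy
    linarith [hxy ▸ h0]
  -- the memory-term recursion
  have key : ∀ m : ℕ, Uβ (m + 1) = (k * γ) • U (m + 1) + Real.exp (-δ * k) • Uβ m := by
    intro m
    rw [hUβ (m + 1), hUβ m,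
      Finset.sum_Icc_succ_top (Nat.one_le_iff_ne_zero.mpr (Nat.succ_ne_zero m)),
      smul_add, add_comm]
    congr 1
    · have h0 : -δ * ((((m:ℕ):ℝ) + 1) * k - (((m:ℕ):ℝ) + 1) * k) = 0 := by ring
      push_cast
      rw [h0, Real.exp_zero, mul_one, smul_smul]
    · rw [Finset.smul_sum, Finset.smul_sum, Finset.smul_sum]
      refine Finset.sum_congr rfl fun j hj => ?_
      rw [smul_smul, smul_smul, smul_smul]
      congr 1
      have h1 : -δ * ((((m:ℕ):ℝ) + 1) * k - (j:ℝ) * k)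
          = -δ * k + -δ * (((m:ℕ):ℝ) * k - (j:ℝ) * k) := by ring
      push_cast
      rw [h1, Real.exp_add]
      ring
  -- one-step energy inequality
  have step : ∀ m : ℕ, m + 1 ≤ N →
      μ * lam₁ * (Real.exp (α * k) *
          (γ * ‖U (m+1)‖ ^ 2 + Real.exp (-δ * k) * a (Uβ (m+1)) (Uβ (m+1)))) ≤
        μ * lam₁ * (γ * ‖U m‖ ^ 2 + Real.exp (-δ * k) * a (Uβ m) (Uβ m))
          + k * γ * F ^ 2 := by
    intro m hm
    have hs := scheme (m+1) (by omega) hm (U (m+1))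
    rw [← hUβ (m+1), hb] at hs
    have hin : (⟪(1 / k) • (U (m+1) - U (m+1-1)), U (m+1)⟫ : ℝ)
        = (1/k) * (‖U (m+1)‖^2 - ⟪U m, U (m+1)⟫) := by
      simp only [Nat.add_sub_cancel]
      rw [real_inner_smul_left, inner_sub_left, real_inner_self_eq_norm_sq]
    rw [hin, add_zero] at hs
    have hW : k * γ * a (Uβ (m+1)) (U (m+1))
        = a (Uβ (m+1)) (Uβ (m+1))
          - Real.exp (-δ * k) * a (Uβ (m+1)) (Uβ m) := by
      have h1 : (k * γ) • U (m+1) = Uβ (m+1) - Real.exp (-δ * k) • Uβ m := by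
        rw [key m]; abel
      have h2 : a (Uβ (m+1)) ((k * γ) • U (m+1))
          = a (Uβ (m+1)) (Uβ (m+1)) - Real.exp (-δ * k) * a (Uβ (m+1)) (Uβ m) := by
        rw [h1, map_sub, map_smul, smul_eq_mul]
      rw [← h2, map_smul, smul_eq_mul]
    have hCS : 2 * (Real.exp (-δ * k) * a (Uβ (m+1)) (Uβ m))
        ≤ a (Uβ (m+1)) (Uβ (m+1)) + Real.exp (-δ * k)^2 * a (Uβ m) (Uβ m) := by
      have h := cs (Uβ (m+1)) (Real.exp (-δ * k) • Uβ m)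
      simp only [map_smul, LinearMap.smul_apply, smul_eq_mul] at h
      nlinarith [h]
    have hpb : 2 * (⟪U m, U (m+1)⟫ : ℝ) ≤ ‖U (m+1)‖^2 + ‖U m‖^2 := by
      have h := real_inner_le_norm (U m) (U (m+1))
      nlinarith [sq_nonneg (‖U m‖ - ‖U (m+1)‖)]
    have hqb : (⟪f (m+1), U (m+1)⟫ : ℝ) ≤ F * ‖U (m+1)‖ := by
      have h1 := real_inner_le_norm (f (m+1)) (U (m+1))
      have h2 := hf (m+1) (by omega) hm
      have h3 : (0:ℝ) ≤ ‖U (m+1)‖ := norm_nonneg _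
      nlinarith
    have hec : Real.exp (α * k) * Real.exp (-δ * k) ≤ 1 := by
      rw [← Real.exp_add]
      exact Real.exp_le_one_iff.mpr (by nlinarith)
    exact step_arith μ γ lam₁ k F (Real.exp (-δ * k)) (Real.exp (α * k))
      (‖U (m+1)‖) (‖U m‖) (a (Uβ (m+1)) (Uβ (m+1))) (a (Uβ m) (Uβ m))
      (a (Uβ (m+1)) (Uβ m)) (⟪U m, U (m+1)⟫ : ℝ) (⟪f (m+1), U (m+1)⟫ : ℝ)
      (a (U (m+1)) (U (m+1))) (a (Uβ (m+1)) (U (m+1)))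
      hμ hγ hk hlam₁ hc0 hc1 hec hαk hs hW hCS hpb hqb (hcoer _) (hpsd _) (hpsd _)
  -- the discrete Gronwall induction
  have hUβ0 : Uβ 0 = 0 := by
    rw [hUβ 0]
    simp
  have claim : ∀ m : ℕ, m ≤ N →
      α * (μ * lam₁ * (γ * ‖U m‖ ^ 2 + Real.exp (-δ * k) * a (Uβ m) (Uβ m)))
        ≤ α * (μ * lam₁) * γ * (Real.exp (-α * ((m:ℝ) * k)) * ‖U 0‖ ^ 2)
          + γ * (1 - Real.exp (-α * ((m:ℝ) * k))) * F ^ 2 := by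
    intro m
    induction m with
    | zero =>
      intro _
      rw [hUβ0]
      simp [Real.exp_zero]
      ring_nf
      simp
    | succ m ih =>
      intro hm
      have ihm := ih (by omega)
      have hstep := step m hm
      have hcast : Real.exp (-α * (((m:ℕ) + 1 : ℝ) * k))
          = Real.exp (-α * k) * Real.exp (-α * ((m:ℝ) * k)) := by
        rw [← Real.exp_add]; ring_nf
      push_cast
      rw [hcast]
      have hee : Real.exp (-α * k) * Real.exp (α * k) = 1 := by
        rw [← Real.exp_add]; ring_nf; exact Real.exp_zero
      refine ind_arith α (μ * lam₁) γ k F (Real.exp (α * k)) (Real.exp (-α * k))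
        (Real.exp (-α * ((m:ℝ) * k))) (‖U 0‖ ^ 2) _ _
        hα (by positivity) hγ (Real.exp_pos _) hee ?_ ?_ ihm
      · have := Real.add_one_le_exp (α * k)
        linarith
      · convert hstep using 3
  -- conclude
  have hmain := claim n hnN
  have hpos : (0:ℝ) < α * (μ * lam₁) * γ := by positivity
  rw [← mul_le_mul_iff_right₀ hpos]
  rw [mul_div_arith α μ lam₁ γ (Real.exp (-δ * k)) (a (Uβ n) (Uβ n)) (‖U n‖ ^ 2)
      (ne_of_gt hγ),
    mul_div_arith2 α μ lam₁ γ (Real.exp (-α * ((n:ℝ) * k))) (‖U 0‖ ^ 2) F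
      (ne_of_gt hα) (ne_of_gt hμ) (ne_of_gt hlam₁)]
  exact hmain
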